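/- arXiv:2207.05307 — 10 statements merged into one kernel-verified Lean document; each statement's English description precedes it below -/
import Mathlib

section
/- Let φ : ℂ^k → ℂ^m be a C¹-smooth map (in the sense of real differentiability). If F is T-nondegenerate and F(φ(F(a,b)), b) = 0 for all a, b ∈ ℂ^m, then φ(F(a,a)) = 0 for every a ∈ ℂ^m. -/
open Matrix Complex

/-- The standard Hermitian inner product on `ℂ^m`: `⟪a,b⟫ = ∑ l, a l * conj (b l)`. -/
noncomputable def hermInner {m : ℕ} (a b : Fin m → ℂ) : ℂ :=
  ∑ l, a l * (starRingEnd ℂ) (b l)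

/-- The `ℂ^k`-valued Hermitian form `F(z,ζ) = (⟪A₁ z, ζ⟫, …, ⟪A_k z, ζ⟫)`. -/
noncomputable def Fform {m k : ℕ} (A : Fin k → Matrix (Fin m) (Fin m) ℂ)
    (z ζ : Fin m → ℂ) : Fin k → ℂ :=
  fun j => hermInner ((A j).mulVec z) ζ

/-- The orthogonal complement `S^F` of a set `S ⊆ ℂ^m`. -/
noncomputable def orthF {m k : ℕ} (A : Fin k → Matrix (Fin m) (Fin m) ℂ)
    (S : Set (Fin m → ℂ)) : Set (Fin m → ℂ) :=
  {x | ∀ y ∈ S, Fform A x y = 0}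

/-- The subspace `T(a,b) = {y : ∃ x, F(x,b) + F(a,y) = 0}`. -/
noncomputable def Tspace {m k : ℕ} (A : Fin k → Matrix (Fin m) (Fin m) ℂ)
    (a b : Fin m → ℂ) : Set (Fin m → ℂ) :=
  {y | ∃ x, Fform A x b + Fform A a y = 0}

/-- `F` is nondegenerate: the `A_j` are `ℝ`-linearly independent, and
`F(z,ζ) = 0` for all `z` implies `ζ = 0`. -/
noncomputable def FNondeg {m k : ℕ} (A : Fin k → Matrix (Fin m) (Fin m) ℂ) : Prop :=
  LinearIndependent ℝ A ∧ ∀ ζ : Fin m → ℂ, (∀ z : Fin m → ℂ, Fform A z ζ = 0) → ζ = 0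

/-- `F` is T-nondegenerate: for generic `a ∈ ℂ^m`, `T(a)^F = {0}`. -/
noncomputable def TNondeg {m k : ℕ} (A : Fin k → Matrix (Fin m) (Fin m) ℂ) : Prop :=
  ∃ U : Set (Fin m → ℂ), IsOpen U ∧ Dense U ∧
    ∀ a ∈ U, orthF A (Tspace A a a) = {0}

lemma Fform_expand {m k : ℕ} (A : Fin k → Matrix (Fin m) (Fin m) ℂ)
    (a x b y : Fin m → ℂ) (t : ℝ) :
    Fform A (a + t • x) (b + t • y) =
      Fform A a b + t • Fform A x b + t • Fform A a y + (t*t) • Fform A x y := by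
  funext j
  simp only [Fform, hermInner, mulVec_add, mulVec_smul, Pi.add_apply, Pi.smul_apply,
    Complex.real_smul, map_add, _root_.map_mul, Complex.conj_ofReal, Complex.ofReal_mul]
  rw [Finset.mul_sum, Finset.mul_sum, Finset.mul_sum, ← Finset.sum_add_distrib,
    ← Finset.sum_add_distrib, ← Finset.sum_add_distrib]
  apply Finset.sum_congr rfl
  intro l _
  ring

lemma key {m k : ℕ} (A : Fin k → Matrix (Fin m) (Fin m) ℂ)
    (φ : (Fin k → ℂ) → (Fin m → ℂ)) (hφ : ContDiff ℝ 1 φ)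
    (h : ∀ a b : Fin m → ℂ, Fform A (φ (Fform A a b)) b = 0)
    (a y x : Fin m → ℂ) (hxy : Fform A x a + Fform A a y = 0) :
    Fform A (φ (Fform A a a)) y = 0 := by
  set p := Fform A a a with hp
  set c := Fform A x y with hc
  set w := φ p with hw
  -- the "curve" identity
  have hg : ∀ t : ℝ, Fform A (φ (p + (t*t) • c)) (a + t • y) = 0 := by
    intro t
    have e : Fform A (a + t • x) (a + t • y) = p + (t*t) • c := by
      rw [Fform_expand]
      rw [add_assoc (Fform A a a), ← smul_add, hxy, smul_zero, add_zero]
    have := h (a + t • x) (a + t • y)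
    rwa [e] at this
  -- derivative of the inner curve is 0
  have hψ : HasDerivAt (fun t : ℝ => p + (t*t) • c) 0 0 := by
    have h1 : HasDerivAt (fun t : ℝ => t*t) 0 0 := by
      simpa using (hasDerivAt_id (0:ℝ)).fun_mul (hasDerivAt_id (0:ℝ))
    simpa using (h1.smul_const c).const_add p
  have hψ0 : (fun t : ℝ => p + (t*t) • c) 0 = p := by simp
  have hu : HasDerivAt (fun t : ℝ => φ (p + (t*t) • c)) 0 0 := by
    have hd : DifferentiableAt ℝ φ p := (hφ.differentiable one_ne_zero).differentiableAt
    have hd2 : HasFDerivAt φ (fderiv ℝ φ p) ((fun t : ℝ => p + (t*t) • c) 0) := by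
      simpa using hd.hasFDerivAt
    simpa [Function.comp_def] using hd2.comp_hasDerivAt 0 hψ
  have hui : ∀ i, HasDerivAt (fun t : ℝ => φ (p + (t*t) • c) i) 0 0 := by
    intro i
    have := hasDerivAt_pi.mp hu i
    simpa using this
  -- componentwise conclusion
  funext j
  -- derivative of g j at 0
  have hterm : ∀ l, HasDerivAt
      (fun t : ℝ => (∑ i, A j l i * φ (p + (t*t) • c) i) *
        ((starRingEnd ℂ) (a l) + t • (starRingEnd ℂ) (y l)))
      ((A j).mulVec w l * (starRingEnd ℂ) (y l)) 0 := by
    intro l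
    have h1 : HasDerivAt (fun t : ℝ => ∑ i, A j l i * φ (p + (t*t) • c) i) 0 0 := by
      have := HasDerivAt.fun_sum (u := Finset.univ)
        (fun i _ => ((hui i).const_mul (A j l i)))
      simpa using this
    have h2 : HasDerivAt (fun t : ℝ => (starRingEnd ℂ) (a l) + t • (starRingEnd ℂ) (y l))
        ((starRingEnd ℂ) (y l)) 0 := by
      simpa using ((hasDerivAt_id (0:ℝ)).smul_const ((starRingEnd ℂ) (y l))).const_add
        ((starRingEnd ℂ) (a l))
    have := h1.fun_mul h2
    simp only [zero_mul, mul_zero, zero_add, zero_smul, add_zero] at this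
    exact this
  have hg' : HasDerivAt
      (fun t : ℝ => ∑ l, (∑ i, A j l i * φ (p + (t*t) • c) i) *
        ((starRingEnd ℂ) (a l) + t • (starRingEnd ℂ) (y l)))
      (Fform A w y j) 0 := by
    have := HasDerivAt.fun_sum (u := Finset.univ) (fun l _ => hterm l)
    simpa [Fform, hermInner] using this
  -- but g j is identically 0
  have hzero : (fun t : ℝ => ∑ l, (∑ i, A j l i * φ (p + (t*t) • c) i) *
      ((starRingEnd ℂ) (a l) + t • (starRingEnd ℂ) (y l))) = fun _ => (0:ℂ) := by
    funext t
    have := congrFun (hg t) j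
    simpa [Fform, hermInner, mulVec, dotProduct, Complex.real_smul, map_add, _root_.map_mul,
      Complex.conj_ofReal] using this
  rw [hzero] at hg'
  have := hg'.unique (hasDerivAt_const 0 (0:ℂ))
  simpa using this

lemma Fform_cont {m k : ℕ} (A : Fin k → Matrix (Fin m) (Fin m) ℂ) :
    Continuous (fun a : Fin m → ℂ => Fform A a a) := by
  apply continuous_pi
  intro j
  simp only [Fform, hermInner, mulVec, dotProduct]
  apply continuous_finset_sum
  intro l _
  apply Continuous.mul
  · apply continuous_finset_sum
    intro i _
    exact continuous_const.mul (continuous_apply i)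
  · exact continuous_star.comp (continuous_apply l)

theorem stmt2 {m k : ℕ} (hm : 0 < m) (hk : 0 < k)
    (A : Fin k → Matrix (Fin m) (Fin m) ℂ) (hHerm : ∀ j, (A j).IsHermitian)
    (hT : TNondeg A)
    (φ : (Fin k → ℂ) → (Fin m → ℂ)) (hφ : ContDiff ℝ 1 φ)
    (h : ∀ a b : Fin m → ℂ, Fform A (φ (Fform A a b)) b = 0) :
    ∀ a : Fin m → ℂ, φ (Fform A a a) = 0 := by
  obtain ⟨U, hUo, hUd, hU⟩ := hT
  have h0 : Set.EqOn (fun a : Fin m → ℂ => φ (Fform A a a)) (fun _ => 0) U := by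
    intro a ha
    have hmem : φ (Fform A a a) ∈ orthF A (Tspace A a a) := by
      intro y hy
      obtain ⟨x, hx⟩ := hy
      exact key A φ hφ h a y x hx
    rw [hU a ha] at hmem
    exact hmem
  have hcφ : Continuous (fun a : Fin m → ℂ => φ (Fform A a a)) :=
    (hφ.continuous).comp (Fform_cont A)
  have heq := Continuous.ext_on hUd hcφ continuous_const h0
  intro a
  exact congrFun heq a
end

section
/- Suppose F is strongly pseudoconvex, i.e., F is nondegenerate and there exists c ∈ ℝ^k such that Σ_j c_j A_j is positive definite. Then F is T-nondegenerate. -/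
open Matrix Complex

/-- Conjugate symmetry of `F` when the matrices are Hermitian. -/
lemma Fform_conj_symm {m k : ℕ} (A : Fin k → Matrix (Fin m) (Fin m) ℂ)
    (hHerm : ∀ j, (A j).IsHermitian) (z ζ : Fin m → ℂ) (j : Fin k) :
    Fform A z ζ j = (starRingEnd ℂ) (Fform A ζ z j) := by
  simp only [Fform, hermInner, map_sum, mulVec, dotProduct, Finset.sum_mul]
  rw [Finset.sum_comm]
  refine Finset.sum_congr rfl fun p _ => Finset.sum_congr rfl fun l _ => ?_
  rw [← (hHerm j).apply l p]
  simp only [RCLike.star_def, _root_.map_mul, Complex.conj_conj]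
  ring

lemma Fform_zero_left {m k : ℕ} (A : Fin k → Matrix (Fin m) (Fin m) ℂ)
    (ζ : Fin m → ℂ) : Fform A 0 ζ = 0 := by
  funext j
  simp [Fform, hermInner, Matrix.mulVec_zero]

lemma Fform_neg_left {m k : ℕ} (A : Fin k → Matrix (Fin m) (Fin m) ℂ)
    (z ζ : Fin m → ℂ) : Fform A (-z) ζ = -Fform A z ζ := by
  funext j
  simp [Fform, hermInner, Matrix.mulVec_neg, Finset.sum_neg_distrib, neg_mul]

open scoped ComplexOrder in
theorem stmt5 {m k : ℕ} (hm : 0 < m) (hk : 0 < k)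
    (A : Fin k → Matrix (Fin m) (Fin m) ℂ) (hHerm : ∀ j, (A j).IsHermitian)
    (hnd : FNondeg A)
    (hspc : ∃ c : Fin k → ℝ, (∑ j, (c j : ℂ) • A j).PosDef) :
    TNondeg A := by
  obtain ⟨c, hc⟩ := hspc
  refine ⟨Set.univ, isOpen_univ, dense_univ, fun a _ => ?_⟩
  ext x
  simp only [Set.mem_singleton_iff]
  constructor
  · intro hx
    -- a ∈ T(a), witness -a (note F(a,a) is fixed by conjugation componentwise? no:
    -- we just use F(-a,a) + F(a,a) = 0)
    have ha : a ∈ Tspace A a a := ⟨-a, by rw [Fform_neg_left]; ring⟩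
    have h1 : Fform A x a = 0 := hx a ha
    -- x ∈ T(a), witness 0, using conjugate symmetry
    have hx' : x ∈ Tspace A a a := by
      refine ⟨0, ?_⟩
      rw [Fform_zero_left, zero_add]
      funext j
      rw [Fform_conj_symm A hHerm a x j]
      have : Fform A x a j = 0 := by rw [h1]; rfl
      simp [this]
    have h2 : Fform A x x = 0 := hx x hx'
    by_contra hxne
    have hpos := hc.dotProduct_mulVec_pos hxne
    have hzero : star x ⬝ᵥ (∑ j, (c j : ℂ) • A j) *ᵥ x = 0 := by
      have hsum : ((∑ j, (c j : ℂ) • A j) *ᵥ x) = ∑ j, (c j : ℂ) • ((A j) *ᵥ x) := by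
        ext l
        simp only [mulVec, dotProduct, Finset.sum_apply, Finset.sum_mul, Finset.smul_sum,
          Matrix.sum_apply, Matrix.smul_apply, Pi.smul_apply, smul_eq_mul]
        rw [Finset.sum_comm]; simp [Finset.mul_sum, mul_assoc]
      have hmain : star x ⬝ᵥ (∑ j, (c j : ℂ) • A j) *ᵥ x
          = ∑ j, (c j : ℂ) * (star x ⬝ᵥ (A j) *ᵥ x) := by
        rw [hsum]
        simp only [dotProduct, Finset.sum_apply, Pi.smul_apply, smul_eq_mul, Finset.mul_sum]
        rw [Finset.sum_comm]
        exact Finset.sum_congr rfl fun j _ => Finset.sum_congr rfl fun l _ => by ring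
      rw [hmain]
      refine Finset.sum_eq_zero fun j _ => ?_
      have hj : Fform A x x j = 0 := by rw [h2]; rfl
      have hFj : (∑ l, ((A j).mulVec x) l * (starRingEnd ℂ) (x l)) = 0 := hj
      have hdp : star x ⬝ᵥ (A j) *ᵥ x = 0 := by
        rw [← hFj]
        simp only [dotProduct, Pi.star_apply, RCLike.star_def]
        exact Finset.sum_congr rfl fun l _ => by ring
      rw [hdp, mul_zero]
    rw [hzero] at hpos
    exact lt_irrefl 0 hpos
  · rintro rfl
    intro y _
    exact Fform_zero_left A y
end

section
/- If for generic a ∈ ℂ^m one has (a^F)^F ∩ a^F = {0}, then F is T-nondegenerate. -/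
open Matrix Complex

theorem stmt6 {m k : ℕ} (hm : 0 < m) (hk : 0 < k)
    (A : Fin k → Matrix (Fin m) (Fin m) ℂ) (hHerm : ∀ j, (A j).IsHermitian)
    (h : ∃ U : Set (Fin m → ℂ), IsOpen U ∧ Dense U ∧
      ∀ a ∈ U, orthF A (orthF A {a}) ∩ orthF A {a} = {0}) :
    TNondeg A := by
  have hsymm : ∀ z ζ : Fin m → ℂ, Fform A z ζ = 0 → Fform A ζ z = 0 := by
    intro z ζ hz
    funext j
    have hj : Fform A z ζ j = 0 := by rw [hz]; rfl
    have key : Fform A ζ z j = (starRingEnd ℂ) (Fform A z ζ j) := by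
      simp only [Fform, hermInner, Matrix.mulVec, dotProduct]
      rw [map_sum]
      simp only [Finset.sum_mul, map_sum, _root_.map_mul, Finset.mul_sum]
      rw [Finset.sum_comm]
      refine Finset.sum_congr rfl fun l _ => Finset.sum_congr rfl fun i _ => ?_
      have hA : A j i l = (starRingEnd ℂ) (A j l i) := by
        conv_lhs => rw [← (hHerm j)]
        rfl
      rw [hA]
      simp only [_root_.map_mul, Complex.conj_conj]
      ring
    rw [key, hj, map_zero]; rfl
  have hzero : ∀ y : Fin m → ℂ, Fform A 0 y = 0 := by
    intro y; funext j
    simp [Fform, hermInner, Matrix.mulVec_zero]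
  have hneg : ∀ a y : Fin m → ℂ, Fform A (-a) y = -Fform A a y := by
    intro a y; funext j
    simp [Fform, hermInner, Matrix.mulVec_neg, Finset.sum_neg_distrib]
  obtain ⟨U, hUopen, hUdense, hU⟩ := h
  refine ⟨U, hUopen, hUdense, fun a ha => ?_⟩
  ext x
  constructor
  · intro hx
    have h1 : x ∈ orthF A (orthF A {a}) ∩ orthF A {a} := by
      constructor
      · intro y hy
        apply hx
        refine ⟨0, ?_⟩
        rw [hzero]
        have : Fform A y a = 0 := hy a rfl
        rw [hsymm _ _ this]
        simp
      · intro y hy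
        rcases hy with rfl
        apply hx
        refine ⟨-y, ?_⟩
        rw [hneg]
        simp
    have := hU a ha
    rw [this] at h1
    exact h1
  · intro hx
    rcases hx with rfl
    intro y _
    exact hzero y
end

section
/- Suppose F is nondegenerate and there exists a ∈ ℂ^m such that the vectors A_1 a, …, A_k a are linearly independent over ℂ. Then F is T-nondegenerate. -/
open Matrix Complex

section Aux

variable {m k : ℕ} (A : Fin k → Matrix (Fin m) (Fin m) ℂ)

/-- row matrix of the vectors `A j *ᵥ a`. -/
noncomputable def Vmat (a : Fin m → ℂ) : Matrix (Fin k) (Fin m) ℂ :=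
  Matrix.of fun j => (A j).mulVec a

/-- Gram determinant. -/
noncomputable def gramDet (a : Fin m → ℂ) : ℂ :=
  (Vmat A a * (Vmat A a)ᴴ).det

lemma gram_apply (a : Fin m → ℂ) (i j : Fin k) :
    (Vmat A a * (Vmat A a)ᴴ) i j
      = ∑ l, (A i).mulVec a l * (starRingEnd ℂ) ((A j).mulVec a l) := by
  simp [Matrix.mul_apply, Vmat, Matrix.conjTranspose_apply]

lemma herm_entry (hHerm : ∀ j, (A j).IsHermitian) (j : Fin k) (l p : Fin m) :
    (starRingEnd ℂ) (A j p l) = A j l p := by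
  have := congrFun (congrFun (hHerm j) l) p
  simpa [Matrix.conjTranspose_apply] using this

/-- symmetry: `F(x,y)_j = conj (F(y,x)_j)`. -/
lemma Fform_symm (hHerm : ∀ j, (A j).IsHermitian) (x y : Fin m → ℂ) (j : Fin k) :
    Fform A x y j = (starRingEnd ℂ) (Fform A y x j) := by
  simp only [Fform, hermInner, Matrix.mulVec, dotProduct, map_sum, _root_.map_mul,
    Complex.conj_conj, Finset.sum_mul]
  rw [Finset.sum_comm]
  refine Finset.sum_congr rfl fun α _ => Finset.sum_congr rfl fun β _ => ?_
  rw [herm_entry A hHerm j β α]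
  ring

/-- `F(x,a) = conj(V a) *ᵥ x`. -/
lemma Fform_eq_mulVec (hHerm : ∀ j, (A j).IsHermitian) (a x : Fin m → ℂ) :
    Fform A x a = ((Vmat A a).map (starRingEnd ℂ)) *ᵥ x := by
  funext j
  simp only [Fform, hermInner, Matrix.mulVec, dotProduct, Matrix.map_apply, Vmat,
    Matrix.of_apply, map_sum, _root_.map_mul, Finset.sum_mul]
  rw [Finset.sum_comm]
  refine Finset.sum_congr rfl fun p _ => Finset.sum_congr rfl fun l _ => ?_
  rw [herm_entry A hHerm j l p]
  ring

/-- If the Gram determinant is nonzero, `x ↦ F(x,a)` is surjective. -/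
lemma Fform_surj (hHerm : ∀ j, (A j).IsHermitian) (a : Fin m → ℂ)
    (hg : gramDet A a ≠ 0) (c : Fin k → ℂ) : ∃ x, Fform A x a = c := by
  set V := Vmat A a
  set M := V.map (starRingEnd ℂ) with hM
  have hMH : Mᴴ = Vᵀ := by
    ext i j
    simp [hM, Matrix.conjTranspose_apply, Matrix.map_apply]
  have hdet : (M * Mᴴ).det = (starRingEnd ℂ) ((V * Vᴴ).det) := by
    have : M * Mᴴ = (V * Vᴴ).map (starRingEnd ℂ) := by
      ext i j
      simp [hM, hMH, Matrix.mul_apply, Matrix.map_apply, Matrix.conjTranspose_apply,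
        Matrix.transpose_apply, map_sum]
    rw [this, ← RingHom.mapMatrix_apply, ← RingHom.map_det]
  have hdet' : (M * Mᴴ).det ≠ 0 := by
    rw [hdet]
    exact (map_ne_zero _).mpr hg
  have hU : IsUnit (M * Mᴴ) := by
    rw [Matrix.isUnit_iff_isUnit_det]
    exact isUnit_iff_ne_zero.mpr hdet'
  obtain ⟨y, hy⟩ := (Matrix.mulVec_surjective_iff_isUnit.mpr hU) c
  refine ⟨Mᴴ *ᵥ y, ?_⟩
  rw [Fform_eq_mulVec A hHerm a, ← hM, Matrix.mulVec_mulVec, hy]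

/-- linear independence gives nonzero Gram determinant. -/
lemma gramDet_ne_zero (a : Fin m → ℂ)
    (hli : LinearIndependent ℂ (fun j => (A j).mulVec a)) : gramDet A a ≠ 0 := by
  set V := Vmat A a
  have hzero : ∀ c : Fin k → ℂ, (V * Vᴴ) *ᵥ c = 0 → c = 0 := by
    intro c hc
    have hw : Vᴴ *ᵥ c = 0 := by
      have h1 : dotProduct (star (Vᴴ *ᵥ c)) (Vᴴ *ᵥ c) = 0 := by
        rw [Matrix.star_mulVec, Matrix.conjTranspose_conjTranspose]
        rw [← dotProduct_mulVec, Matrix.mulVec_mulVec, hc, dotProduct_zero]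
      funext l
      have h2 : ∑ l, Complex.normSq ((Vᴴ *ᵥ c) l) = 0 := by
        have h3 : ((∑ l, Complex.normSq ((Vᴴ *ᵥ c) l) : ℝ) : ℂ) = 0 := by
          push_cast
          rw [← h1]
          simp only [dotProduct, Pi.star_apply, RCLike.star_def]
          exact Finset.sum_congr rfl fun l _ => by
            rw [mul_comm, Complex.mul_conj]
        exact_mod_cast h3
      have h4 := (Finset.sum_eq_zero_iff_of_nonneg
        (fun l _ => Complex.normSq_nonneg _)).mp h2 l (Finset.mem_univ l)
      simpa using Complex.normSq_eq_zero.mp h4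
    have hcoef : ∀ l, ∑ j, (starRingEnd ℂ) (c j) * V j l = 0 := by
      intro l
      have := congrFun hw l
      simp only [Matrix.mulVec, dotProduct, Matrix.conjTranspose_apply] at this
      have := congrArg (starRingEnd ℂ) this
      simp only [map_sum, _root_.map_mul, Complex.conj_conj, Pi.zero_apply, map_zero,
        RCLike.star_def] at this
      rw [← this]
      exact Finset.sum_congr rfl fun j _ => mul_comm _ _
    have := Fintype.linearIndependent_iff.mp hli (fun j => (starRingEnd ℂ) (c j)) ?_
    · funext j
      have := this j
      simpa using congrArg (starRingEnd ℂ) this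
    · funext l
      simpa [Finset.sum_apply, smul_eq_mul, V, Vmat] using hcoef l
  have hinj : Function.Injective ((V * Vᴴ).mulVec) := by
    intro c c' hcc
    have : (V * Vᴴ) *ᵥ (c - c') = 0 := by
      rw [Matrix.mulVec_sub, hcc, sub_self]
    have := hzero _ this
    exact sub_eq_zero.mp this
  have hU : IsUnit (V * Vᴴ) := Matrix.mulVec_injective_iff_isUnit.mp hinj
  have := (Matrix.isUnit_iff_isUnit_det _).mp hU
  exact isUnit_iff_ne_zero.mp this


lemma mulVec_entry_continuous (i : Fin k) (l : Fin m) :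
    Continuous fun a : Fin m → ℂ => (A i).mulVec a l := by
  simp only [Matrix.mulVec, dotProduct]
  exact continuous_finset_sum _ fun p _ => continuous_const.mul (continuous_apply p)

lemma gramDet_continuous : Continuous (gramDet A) := by
  have hentry : Continuous fun a => Vmat A a * (Vmat A a)ᴴ := by
    apply continuous_matrix
    intro i j
    simp only [gram_apply]
    exact continuous_finset_sum _ fun l _ => (mulVec_entry_continuous A i l).mul
      (continuous_star.comp (mulVec_entry_continuous A j l))
  exact hentry.matrix_det

lemma line_analytic (a0 b : Fin m → ℂ) :
    AnalyticOnNhd ℝ (fun t : ℂ => gramDet A (b + t • (a0 - b))) Set.univ := by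
  have hconj : AnalyticOnNhd ℝ (fun z : ℂ => (starRingEnd ℂ) z) Set.univ := by
    have := Complex.conjCLE.toContinuousLinearMap.analyticOnNhd (Set.univ : Set ℂ)
    exact this
  have hentry : ∀ (i : Fin k) (l : Fin m), AnalyticOnNhd ℝ
      (fun t : ℂ => (A i).mulVec (b + t • (a0 - b)) l) Set.univ := by
    intro i l
    have heq : (fun t : ℂ => (A i).mulVec (b + t • (a0 - b)) l)
        = fun t => (A i).mulVec b l + t * (A i).mulVec (a0 - b) l := by
      funext t
      simp [Matrix.mulVec_add, Matrix.mulVec_smul, smul_eq_mul]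
    rw [heq]
    exact analyticOnNhd_const.add (analyticOnNhd_id.mul analyticOnNhd_const)
  have hG : ∀ i j : Fin k, AnalyticOnNhd ℝ
      (fun t : ℂ => (Vmat A (b + t • (a0 - b)) * (Vmat A (b + t • (a0 - b)))ᴴ) i j)
      Set.univ := by
    intro i j
    simp only [_root_.gram_apply]
    exact Finset.analyticOnNhd_fun_sum _ fun l _ =>
      (hentry i l).mul ((hconj.comp (hentry j l)) (Set.mapsTo_univ _ _))
  have hdet : (fun t : ℂ => gramDet A (b + t • (a0 - b)))
      = fun t => ∑ σ : Equiv.Perm (Fin k), ((Equiv.Perm.sign σ : ℤ) : ℂ) *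
          ∏ i, (Vmat A (b + t • (a0 - b)) * (Vmat A (b + t • (a0 - b)))ᴴ) (σ i) i := by
    funext t
    rw [gramDet, Matrix.det_apply']
  rw [hdet]
  exact Finset.analyticOnNhd_fun_sum _ fun σ _ => analyticOnNhd_const.mul
    (Finset.analyticOnNhd_fun_prod _ fun i _ => hG (σ i) i)

lemma gram_dense (a0 : Fin m → ℂ) (h0 : gramDet A a0 ≠ 0) :
    Dense {a : Fin m → ℂ | gramDet A a ≠ 0} := by
  intro b
  by_contra hb
  have hopen : IsOpen (closure {a : Fin m → ℂ | gramDet A a ≠ 0})ᶜ :=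
    isOpen_compl_iff.mpr isClosed_closure
  have hcont : Continuous fun t : ℂ => b + t • (a0 - b) := by continuity
  have hmem : b + (0:ℂ) • (a0 - b) ∈ (closure {a : Fin m → ℂ | gramDet A a ≠ 0})ᶜ := by
    simpa using hb
  have hev : (fun t : ℂ => gramDet A (b + t • (a0 - b))) =ᶠ[nhds 0] 0 := by
    have hpre := (hcont.continuousAt (x := (0:ℂ))).preimage_mem_nhds (hopen.mem_nhds hmem)
    filter_upwards [hpre] with t ht
    by_contra hne
    exact ht (subset_closure hne)
  have hzero := (line_analytic A a0 b).eqOn_zero_of_preconnected_of_eventuallyEq_zero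
    isPreconnected_univ (Set.mem_univ (0:ℂ)) hev
  have h1 := hzero (Set.mem_univ (1:ℂ))
  simp only [one_smul, Pi.zero_apply] at h1
  rw [show b + (a0 - b) = a0 by ring] at h1
  exact h0 h1

theorem stmt7' (hHerm : ∀ j, (A j).IsHermitian)
    (hnd : FNondeg A)
    (h : ∃ a : Fin m → ℂ, LinearIndependent ℂ (fun j => (A j).mulVec a)) :
    TNondeg A := by
  obtain ⟨a0, hli⟩ := h
  refine ⟨{a | gramDet A a ≠ 0}, ?_, gram_dense A a0 (gramDet_ne_zero A a0 hli), ?_⟩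
  · exact isOpen_ne.preimage (gramDet_continuous A)
  · intro a ha
    have hT : Tspace A a a = Set.univ := by
      ext y
      simp only [Tspace, Set.mem_setOf_eq, Set.mem_univ, iff_true]
      obtain ⟨x, hx⟩ := Fform_surj A hHerm a ha (-(Fform A a y))
      exact ⟨x, by rw [hx]; simp⟩
    ext x
    simp only [Set.mem_singleton_iff]
    constructor
    · intro hx
      have hx' : ∀ y, Fform A x y = 0 := fun y => hx y (hT ▸ Set.mem_univ y)
      apply hnd.2 x
      intro z
      funext j
      have hc := congrFun (hx' z) j
      rw [Fform_symm A hHerm x z j] at hc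
      have := congrArg (starRingEnd ℂ) hc
      simpa using this
    · rintro rfl y _
      funext j
      simp [Fform, hermInner, Matrix.mulVec_zero]

end Aux

theorem stmt7 {m k : ℕ} (hm : 0 < m) (hk : 0 < k)
    (A : Fin k → Matrix (Fin m) (Fin m) ℂ) (hHerm : ∀ j, (A j).IsHermitian)
    (hnd : FNondeg A)
    (h : ∃ a : Fin m → ℂ, LinearIndependent ℂ (fun j => (A j).mulVec a)) :
    TNondeg A := by
  exact stmt7' A hHerm hnd h
end

section
/- Suppose F is nondegenerate and D-nondegenerate. Then F is T-nondegenerate. -/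
open Matrix Complex

/-- The `k×k` matrix `B` with entries `B_{lj} = ⟪A_l A⁻¹ A_j a, a⟫`,
where `Amat = ∑ c_j A_j`. -/
noncomputable def Bmatrix {m k : ℕ} (A : Fin k → Matrix (Fin m) (Fin m) ℂ)
    (c : Fin k → ℝ) (a : Fin m → ℂ) : Matrix (Fin k) (Fin k) ℂ :=
  fun l j => hermInner ((A l * (∑ i, (c i : ℂ) • A i)⁻¹ * A j).mulVec a) a

/-- `Re B = (B + conj B)/2` (entrywise conjugate). -/
noncomputable def ReB {m k : ℕ} (A : Fin k → Matrix (Fin m) (Fin m) ℂ)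
    (c : Fin k → ℝ) (a : Fin m → ℂ) : Matrix (Fin k) (Fin k) ℂ :=
  (2 : ℂ)⁻¹ • (Bmatrix A c a + (Bmatrix A c a).map (starRingEnd ℂ))

/-- `F` is D-nondegenerate. -/
noncomputable def DNondeg {m k : ℕ} (A : Fin k → Matrix (Fin m) (Fin m) ℂ) : Prop :=
  ∃ (c : Fin k → ℝ) (a : Fin m → ℂ),
    IsUnit (∑ i, (c i : ℂ) • A i) ∧ (ReB A c a).det ≠ 0



section AuxLemmas
open Polynomial

lemma hermInner_swap {m : ℕ} {A : Matrix (Fin m) (Fin m) ℂ} (hA : A.IsHermitian)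
    (u v : Fin m → ℂ) :
    hermInner (A.mulVec u) v = (starRingEnd ℂ) (hermInner (A.mulVec v) u) := by
  unfold hermInner
  simp only [Matrix.mulVec, dotProduct, Finset.sum_mul, map_sum, _root_.map_mul,
    Complex.conj_conj]
  rw [Finset.sum_comm]
  refine Finset.sum_congr rfl fun t _ => Finset.sum_congr rfl fun p _ => ?_
  have h := hA.apply p t
  simp only [RCLike.star_def] at h
  rw [← h]
  ring

lemma hermInner_add_left {m : ℕ} (u v w : Fin m → ℂ) :
    hermInner (u + v) w = hermInner u w + hermInner v w := by
  unfold hermInner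
  rw [← Finset.sum_add_distrib]
  exact Finset.sum_congr rfl fun l _ => by simp [add_mul]

lemma hermInner_smul_left {m : ℕ} (z : ℂ) (u w : Fin m → ℂ) :
    hermInner (z • u) w = z * hermInner u w := by
  unfold hermInner
  rw [Finset.mul_sum]
  exact Finset.sum_congr rfl fun l _ => by simp [mul_assoc]

lemma hermInner_sum_left {m : ℕ} {ι : Type*} (s : Finset ι) (u : ι → (Fin m → ℂ)) (w : Fin m → ℂ) :
    hermInner (∑ i ∈ s, u i) w = ∑ i ∈ s, hermInner (u i) w := by
  classical
  induction s using Finset.induction with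
  | empty => simp [hermInner]
  | @insert a s h ih => rw [Finset.sum_insert h, Finset.sum_insert h, hermInner_add_left, ih]

lemma hermInner_neg_left {m : ℕ} (u w : Fin m → ℂ) :
    hermInner (-u) w = -hermInner u w := by
  unfold hermInner; simp [Finset.sum_neg_distrib]


lemma sum_mulVec' {m k : ℕ} (M : Fin k → Matrix (Fin m) (Fin m) ℂ) (v : Fin m → ℂ) :
    (∑ i, M i) *ᵥ v = ∑ i, (M i) *ᵥ v := by
  funext q
  simp only [Matrix.mulVec, dotProduct, Matrix.sum_apply, Finset.sum_apply,
    Finset.sum_mul]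
  exact Finset.sum_comm

lemma mulVec_sum' {m k : ℕ} (M : Matrix (Fin m) (Fin m) ℂ) (v : Fin k → (Fin m → ℂ)) :
    M *ᵥ (∑ i, v i) = ∑ i, M *ᵥ (v i) := by
  funext q
  simp only [Matrix.mulVec, dotProduct, Finset.sum_apply, Finset.mul_sum]
  exact Finset.sum_comm

/-- real part of hermInner against `w` represents any real functional -/
lemma exists_w_repr {m : ℕ} (φ : (Fin m → ℂ) →ₗ[ℝ] ℝ) :
    ∃ w : Fin m → ℂ, ∀ u : Fin m → ℂ, (hermInner u w).re = φ u := by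
  refine ⟨fun t => (φ (Pi.single t 1) : ℂ) + (φ (Pi.single t Complex.I) : ℂ) * Complex.I,
    fun u => ?_⟩
  have hu : u = ∑ t, Pi.single t (u t) := (Finset.univ_sum_single u).symm
  conv_rhs => rw [hu]
  rw [map_sum]
  unfold hermInner
  rw [Complex.re_sum]
  refine Finset.sum_congr rfl fun t _ => ?_
  have hsingle : Pi.single t (u t) = (u t).re • (Pi.single t (1:ℂ) : Fin m → ℂ)
      + (u t).im • (Pi.single t Complex.I : Fin m → ℂ) := by
    funext q
    by_cases h : q = t
    · subst h
      simp only [Pi.single_eq_same, Pi.add_apply, Pi.smul_apply, Complex.real_smul, mul_one]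
      exact (Complex.re_add_im _).symm
    · simp [Pi.single_eq_of_ne h]
  have hφval : φ (Pi.single t (u t))
      = (u t).re * φ (Pi.single t (1:ℂ)) + (u t).im * φ (Pi.single t Complex.I) := by
    rw [hsingle, map_add φ, φ.map_smul, φ.map_smul, smul_eq_mul, smul_eq_mul]
  rw [hφval]
  simp [Complex.mul_re, Complex.add_re, Complex.add_im, Complex.mul_im, Complex.I_re,
    Complex.I_im, Complex.conj_re, Complex.conj_im, Complex.ofReal_re, Complex.ofReal_im]

lemma key_s9 {m k : ℕ} (A : Fin k → Matrix (Fin m) (Fin m) ℂ) (hHerm : ∀ j, (A j).IsHermitian)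
    (c : Fin k → ℝ) (hU : IsUnit (∑ i, (c i : ℂ) • A i)) (a : Fin m → ℂ)
    (hdet : (ReB A c a).det ≠ 0) :
    orthF A (Tspace A a a) = {0} := by
  set Amat : Matrix (Fin m) (Fin m) ℂ := ∑ i, (c i : ℂ) • A i with hAmat
  have hAdet : IsUnit Amat.det := (Matrix.isUnit_iff_isUnit_det _).mp hU
  have hinv : Amat⁻¹ * Amat = 1 := Matrix.nonsing_inv_mul _ hAdet
  apply Set.eq_singleton_iff_unique_mem.mpr
  constructor
  · intro y _
    funext j
    simp [Fform, hermInner, Matrix.mulVec_zero]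
  · intro x hx
    -- Step 1 : a ∈ T(a), hence F(x,a) = 0
    have ha_mem : a ∈ Tspace A a a := by
      refine ⟨-a, ?_⟩
      funext j
      have : ((A j).mulVec (-a)) = -((A j).mulVec a) := by
        simp [Matrix.mulVec_neg]
      simp [Fform, this, hermInner_neg_left]
    have h1 : Fform A x a = 0 := hx a ha_mem
    -- Step 2 : Amat x ∈ real span of the A_p a
    have hmem : Amat.mulVec x ∈ Submodule.span ℝ (Set.range fun p => (A p).mulVec a) := by
      by_contra hnm
      obtain ⟨φ, hφx, hφbot⟩ := Submodule.exists_dual_map_eq_bot_of_notMem hnm inferInstance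
      obtain ⟨w, hw⟩ := exists_w_repr φ
      have hφgen : ∀ p, φ ((A p).mulVec a) = 0 := by
        intro p
        have hin : (A p).mulVec a ∈ Submodule.span ℝ (Set.range fun p => (A p).mulVec a) :=
          Submodule.subset_span ⟨p, rfl⟩
        have : φ ((A p).mulVec a) ∈
            (Submodule.span ℝ (Set.range fun p => (A p).mulVec a)).map φ :=
          Submodule.mem_map_of_mem hin
        rw [hφbot] at this
        simpa using this
      have hw_re : ∀ j, (hermInner ((A j).mulVec w) a).re = 0 := by
        intro j
        have h0 : (hermInner ((A j).mulVec a) w).re = 0 := by rw [hw]; exact hφgen j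
        rw [hermInner_swap (hHerm j) a w] at h0
        simpa using h0
      have hw_mem : w ∈ Tspace A a a := by
        refine ⟨w, ?_⟩
        funext j
        show hermInner ((A j).mulVec w) a + hermInner ((A j).mulVec a) w = 0
        rw [hermInner_swap (hHerm j) a w, Complex.add_conj]
        rw [hw_re j]
        simp
      have hxw : Fform A x w = 0 := hx w hw_mem
      have hφj : ∀ j, φ ((A j).mulVec x) = 0 := by
        intro j
        rw [← hw]
        have : hermInner ((A j).mulVec x) w = 0 := congrFun hxw j
        rw [this]
        simp
      have hAx : Amat.mulVec x = ∑ j, (c j) • ((A j).mulVec x) := by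
        rw [hAmat, sum_mulVec']
        refine Finset.sum_congr rfl fun j _ => ?_
        rw [Matrix.smul_mulVec]
        funext q
        simp [Complex.real_smul]
      have : φ (Amat.mulVec x) = 0 := by
        rw [hAx, map_sum]
        simp [_root_.map_smul, hφj]
      exact hφx this
    obtain ⟨t, ht⟩ := (Submodule.mem_span_range_iff_exists_fun ℝ).mp hmem
    -- Step 3 : B t = 0 hence ReB t = 0 hence t = 0
    have hBt : ∀ l, ∑ j, Bmatrix A c a l j * (t j : ℂ) = 0 := by
      intro l
      have expand : ∀ j, Bmatrix A c a l j * (t j : ℂ)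
          = hermInner ((A l * Amat⁻¹).mulVec ((t j : ℂ) • ((A j).mulVec a))) a := by
        intro j
        rw [Matrix.mulVec_smul, hermInner_smul_left]
        unfold Bmatrix
        rw [← hAmat, mul_comm]
        congr 2
        rw [← Matrix.mulVec_mulVec]
      calc ∑ j, Bmatrix A c a l j * (t j : ℂ)
          = ∑ j, hermInner ((A l * Amat⁻¹).mulVec ((t j : ℂ) • ((A j).mulVec a))) a := by
            exact Finset.sum_congr rfl fun j _ => expand j
        _ = hermInner ((A l * Amat⁻¹).mulVec (∑ j, (t j : ℂ) • ((A j).mulVec a))) a := by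
            rw [← hermInner_sum_left]
            congr 1
            rw [mulVec_sum']
        _ = hermInner ((A l).mulVec x) a := by
            congr 1
            have hsum : (∑ j, (t j : ℂ) • ((A j).mulVec a)) = Amat.mulVec x := by
              rw [← ht]
              refine Finset.sum_congr rfl fun j _ => ?_
              funext q
              simp [Complex.real_smul]
            rw [hsum, Matrix.mulVec_mulVec, mul_assoc, hinv, mul_one]
        _ = 0 := congrFun h1 l
    have hRBt : (ReB A c a).mulVec (fun j => (t j : ℂ)) = 0 := by
      funext l
      show ∑ j, ReB A c a l j * (t j : ℂ) = 0
      unfold ReB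
      have : ∀ j, ((2:ℂ)⁻¹ • (Bmatrix A c a + (Bmatrix A c a).map (starRingEnd ℂ))) l j * (t j:ℂ)
          = (2:ℂ)⁻¹ * (Bmatrix A c a l j * (t j : ℂ))
            + (2:ℂ)⁻¹ * ((starRingEnd ℂ) (Bmatrix A c a l j * (t j : ℂ))) := by
        intro j
        simp [Matrix.smul_apply, Matrix.add_apply, Matrix.map_apply, _root_.map_mul, Complex.conj_ofReal]
        ring
      rw [Finset.sum_congr rfl fun j _ => this j, Finset.sum_add_distrib, ← Finset.mul_sum,
        ← Finset.mul_sum, ← map_sum, hBt l]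
      simp
    have htzero : ∀ j, t j = 0 := by
      have h1' : (fun j => (t j : ℂ)) = (ReB A c a)⁻¹.mulVec ((ReB A c a).mulVec
          (fun j => (t j : ℂ))) := by
        rw [Matrix.mulVec_mulVec, Matrix.nonsing_inv_mul _ (isUnit_iff_ne_zero.mpr hdet),
          Matrix.one_mulVec]
      rw [hRBt, Matrix.mulVec_zero] at h1'
      intro j
      have h2 := congrFun h1' j
      simp only [Pi.zero_apply] at h2
      exact_mod_cast h2
    have hAx0 : Amat.mulVec x = 0 := by
      rw [← ht]
      simp [htzero]
    have : x = 0 := by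
      have : Amat⁻¹.mulVec (Amat.mulVec x) = x := by
        rw [Matrix.mulVec_mulVec, hinv, Matrix.one_mulVec]
      rw [hAx0, Matrix.mulVec_zero] at this
      exact this.symm
    exact this


lemma Bmatrix_entry {m k : ℕ} (A : Fin k → Matrix (Fin m) (Fin m) ℂ)
    (c : Fin k → ℝ) (a : Fin m → ℂ) (l j : Fin k) :
    Bmatrix A c a l j
      = ∑ t, (∑ p, (A l * (∑ i, (c i : ℂ) • A i)⁻¹ * A j) t p * a p) * (starRingEnd ℂ) (a t) := by
  unfold Bmatrix hermInner
  exact Finset.sum_congr rfl fun t _ => rfl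

lemma continuous_detReB {m k : ℕ} (A : Fin k → Matrix (Fin m) (Fin m) ℂ) (c : Fin k → ℝ) :
    Continuous fun a : Fin m → ℂ => (ReB A c a).det := by
  apply Continuous.matrix_det
  apply continuous_matrix
  intro l j
  have hB : Continuous fun a : Fin m → ℂ => Bmatrix A c a l j := by
    simp only [Bmatrix_entry]
    apply continuous_finset_sum
    intro t _
    apply Continuous.mul
    · apply continuous_finset_sum
      intro p _
      exact continuous_const.mul (continuous_apply p)
    · exact Complex.continuous_conj.comp (continuous_apply t)
  show Continuous fun a : Fin m → ℂ =>
    ((2:ℂ)⁻¹ • (Bmatrix A c a + (Bmatrix A c a).map (starRingEnd ℂ))) l j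
  simp only [Matrix.smul_apply, Matrix.add_apply, Matrix.map_apply, smul_eq_mul]
  exact continuous_const.mul (hB.add (Complex.continuous_conj.comp hB))

lemma isOpen_detReB {m k : ℕ} (A : Fin k → Matrix (Fin m) (Fin m) ℂ) (c : Fin k → ℝ) :
    IsOpen {a : Fin m → ℂ | (ReB A c a).det ≠ 0} := by
  have : {a : Fin m → ℂ | (ReB A c a).det ≠ 0}
      = (fun a => (ReB A c a).det) ⁻¹' ({0}ᶜ) := rfl
  rw [this]
  exact (isOpen_compl_singleton).preimage (continuous_detReB A c)

lemma conj_add_smul (s : ℝ) (x u : Fin m → ℂ) (t : Fin m) :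
    (starRingEnd ℂ) ((x + s • u) t) = (starRingEnd ℂ) (x t) + (s:ℂ) * (starRingEnd ℂ) (u t) := by
  simp [Pi.add_apply, Pi.smul_apply, Complex.real_smul, map_add, _root_.map_mul,
    Complex.conj_ofReal]

lemma ReB_eval_poly {m k : ℕ} (A : Fin k → Matrix (Fin m) (Fin m) ℂ) (c : Fin k → ℝ)
    (x u : Fin m → ℂ) :
    ∃ P : Polynomial ℂ, ∀ s : ℝ, P.eval (s:ℂ) = (ReB A c (x + s • u)).det := by
  classical
  set N : Fin k → Fin k → Matrix (Fin m) (Fin m) ℂ :=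
    fun l j => A l * (∑ i, (c i : ℂ) • A i)⁻¹ * A j with hN
  set pB : Fin k → Fin k → Polynomial ℂ := fun l j =>
    ∑ t, (∑ p, C (N l j t p) * (C (x p) + C (u p) * X)) *
      (C ((starRingEnd ℂ) (x t)) + C ((starRingEnd ℂ) (u t)) * X) with hpB
  set pBc : Fin k → Fin k → Polynomial ℂ := fun l j =>
    ∑ t, (∑ p, C ((starRingEnd ℂ) (N l j t p)) *
        (C ((starRingEnd ℂ) (x p)) + C ((starRingEnd ℂ) (u p)) * X)) *
      (C (x t) + C (u t) * X) with hpBc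
  refine ⟨Matrix.det (Matrix.of fun l j => C ((2:ℂ)⁻¹) * (pB l j + pBc l j)), fun s => ?_⟩
  rw [← Polynomial.coe_evalRingHom, RingHom.map_det]
  congr 1
  ext l j
  show ((C ((2:ℂ)⁻¹) * (pB l j + pBc l j)).eval (s:ℂ)) = ReB A c (x + s • u) l j
  have hBeval : (pB l j).eval (s:ℂ) = Bmatrix A c (x + s • u) l j := by
    rw [Bmatrix_entry, hpB]
    simp only [eval_finset_sum, eval_mul, eval_add, eval_C, eval_X]
    refine Finset.sum_congr rfl fun t _ => ?_
    rw [conj_add_smul]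
    congr 1
    · refine Finset.sum_congr rfl fun p _ => ?_
      simp only [Pi.add_apply, Pi.smul_apply, Complex.real_smul, hN]
      ring
    · ring
  have hBceval : (pBc l j).eval (s:ℂ) = (starRingEnd ℂ) (Bmatrix A c (x + s • u) l j) := by
    rw [Bmatrix_entry, hpBc, map_sum]
    simp only [eval_finset_sum, eval_mul, eval_add, eval_C, eval_X]
    refine Finset.sum_congr rfl fun t _ => ?_
    rw [_root_.map_mul, map_sum, conj_add_smul]
    congr 1
    · refine Finset.sum_congr rfl fun p _ => ?_
      rw [_root_.map_mul, conj_add_smul]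
      simp only [hN]
      ring
    · simp only [Complex.conj_conj, Pi.add_apply, Pi.smul_apply, Complex.real_smul,
        map_add, _root_.map_mul, Complex.conj_ofReal]
      ring
  rw [eval_mul, eval_add, eval_C, hBeval, hBceval]
  show _ = ((2:ℂ)⁻¹ • (Bmatrix A c (x+s•u) + (Bmatrix A c (x+s•u)).map (starRingEnd ℂ))) l j
  simp [Matrix.smul_apply, Matrix.add_apply, Matrix.map_apply]

lemma dense_detReB {m k : ℕ} (A : Fin k → Matrix (Fin m) (Fin m) ℂ) (c : Fin k → ℝ)
    (a₀ : Fin m → ℂ) (h₀ : (ReB A c a₀).det ≠ 0) :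
    Dense {a : Fin m → ℂ | (ReB A c a).det ≠ 0} := by
  rw [Metric.dense_iff]
  intro x r hr
  obtain ⟨P, hP⟩ := ReB_eval_poly A c x (a₀ - x)
  have hP1 : P.eval (((1:ℝ)):ℂ) ≠ 0 := by
    rw [hP 1]
    have : x + (1:ℝ) • (a₀ - x) = a₀ := by
      rw [one_smul]
      abel
    rw [this]
    exact h₀
  have hPne : P ≠ 0 := fun h => hP1 (by simp [h])
  set δ : ℝ := r / (‖a₀ - x‖ + 1) with hδ
  have hden : (0:ℝ) < ‖a₀ - x‖ + 1 := by positivity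
  have hδpos : 0 < δ := div_pos hr hden
  have hex : ∃ s ∈ Set.Ioo (0:ℝ) δ, P.eval ((s:ℝ):ℂ) ≠ 0 := by
    by_contra h
    push_neg at h
    have hsub : (fun s : ℝ => (s:ℂ)) '' Set.Ioo 0 δ ⊆ {z : ℂ | P.IsRoot z} := by
      rintro z ⟨s, hs, rfl⟩
      exact h s hs
    have hinf : ((fun s : ℝ => (s:ℂ)) '' Set.Ioo 0 δ).Infinite :=
      (Set.Ioo_infinite hδpos).image (fun a _ b _ hab => by exact_mod_cast hab)
    exact hPne (P.eq_zero_of_infinite_isRoot (hinf.mono hsub))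
  obtain ⟨s, hs, hsne⟩ := hex
  refine ⟨x + s • (a₀ - x), ?_, ?_⟩
  · rw [Metric.mem_ball, dist_eq_norm]
    have heq : x + s • (a₀ - x) - x = s • (a₀ - x) := by abel
    rw [heq, norm_smul, Real.norm_eq_abs, abs_of_pos hs.1]
    calc s * ‖a₀ - x‖ ≤ s * (‖a₀ - x‖ + 1) := by
          apply mul_le_mul_of_nonneg_left (by linarith) (le_of_lt hs.1)
      _ < δ * (‖a₀ - x‖ + 1) := by
          apply mul_lt_mul_of_pos_right hs.2 hden
      _ = r := by
          rw [hδ, div_mul_cancel₀ _ (ne_of_gt hden)]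
  · show (ReB A c (x + s • (a₀ - x))).det ≠ 0
    rw [← hP s]
    exact hsne


end AuxLemmas

theorem stmt9 {m k : ℕ} (hm : 0 < m) (hk : 0 < k)
    (A : Fin k → Matrix (Fin m) (Fin m) ℂ) (hHerm : ∀ j, (A j).IsHermitian)
    (hnd : FNondeg A) (hD : DNondeg A) :
    TNondeg A := by
  obtain ⟨c, a₀, hU, hdet₀⟩ := hD
  exact ⟨{a : Fin m → ℂ | (ReB A c a).det ≠ 0}, isOpen_detReB A c,
    dense_detReB A c a₀ hdet₀, fun a ha => key_s9 A hHerm c hU a ha⟩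
end

section
/- For every a ∈ ℂ^m, (a^{Re F})^{Re F} ⊆ (a^F)^F. -/
open Matrix Complex

/-- The orthogonal complement `S^{Re F}` of a set `S ⊆ ℂ^m` with respect to
the componentwise real part of `F`. -/
noncomputable def orthReF {m k : ℕ} (A : Fin k → Matrix (Fin m) (Fin m) ℂ)
    (S : Set (Fin m → ℂ)) : Set (Fin m → ℂ) :=
  {x | ∀ y ∈ S, ∀ j, (Fform A x y j).re = 0}

lemma Fform_smul_left {m k : ℕ} (A : Fin k → Matrix (Fin m) (Fin m) ℂ)
    (c : ℂ) (y a : Fin m → ℂ) (j : Fin k) :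
    Fform A (fun l => c * y l) a j = c * Fform A y a j := by
  simp only [Fform, hermInner, Finset.mul_sum]
  refine Finset.sum_congr rfl fun l _ => ?_
  have : (A j).mulVec (fun l => c * y l) l = c * (A j).mulVec y l := by
    simp only [Matrix.mulVec, dotProduct, Finset.mul_sum]
    exact Finset.sum_congr rfl fun i _ => by ring
  rw [this]; ring

lemma Fform_smul_right {m k : ℕ} (A : Fin k → Matrix (Fin m) (Fin m) ℂ)
    (c : ℂ) (x y : Fin m → ℂ) (j : Fin k) :
    Fform A x (fun l => c * y l) j = (starRingEnd ℂ) c * Fform A x y j := by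
  simp only [Fform, hermInner, Finset.mul_sum]
  refine Finset.sum_congr rfl fun l _ => ?_
  rw [RingHom.map_mul]; ring

theorem stmt11 {m k : ℕ} (hm : 0 < m) (hk : 0 < k)
    (A : Fin k → Matrix (Fin m) (Fin m) ℂ) (hHerm : ∀ j, (A j).IsHermitian) :
    ∀ a : Fin m → ℂ,
      orthReF A (orthReF A {a}) ⊆ orthF A (orthF A {a}) := by
  intro a x hx y hy
  have hya : Fform A y a = 0 := hy a rfl
  have hy1 : y ∈ orthReF A {a} := by
    intro y' hy' j
    rw [Set.mem_singleton_iff] at hy'; subst hy'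
    rw [hya]; simp
  have hy2 : (fun l => Complex.I * y l) ∈ orthReF A {a} := by
    intro y' hy' j
    rw [Set.mem_singleton_iff] at hy'; subst hy'
    rw [Fform_smul_left, hya]; simp
  have h1 := hx y hy1
  have h2 := hx _ hy2
  funext j
  have h2j := h2 j
  rw [Fform_smul_right] at h2j
  have : (starRingEnd ℂ) Complex.I = -Complex.I := by simp
  rw [this] at h2j
  simp only [neg_mul, Complex.neg_re, Complex.mul_re, Complex.I_re, Complex.I_im] at h2j
  have h1j := h1 j
  refine Complex.ext h1j ?_
  simp only [Pi.zero_apply, Complex.zero_im]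
  linarith
end

section
/- Let L be an m×m complex matrix such that ⟨La, b⟩² = ⟨a, b⟩ · ⟨L²a, b⟩ for all a, b ∈ ℂ^m. Then L = λI for some λ ∈ ℂ, i.e., L is a scalar matrix. -/
open Matrix Complex

lemma hermInner_single_right {m : ℕ} (v : Fin m → ℂ) (j : Fin m) :
    hermInner v (Pi.single j 1) = v j := by
  simp [hermInner, Pi.single_apply, apply_ite (starRingEnd ℂ), mul_ite]

theorem stmt15 {m : ℕ} (hm : 0 < m) (L : Matrix (Fin m) (Fin m) ℂ)
    (h : ∀ a b : Fin m → ℂ,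
      (hermInner (L.mulVec a) b) ^ 2 = hermInner a b * hermInner ((L * L).mulVec a) b) :
    ∃ lam : ℂ, L = lam • (1 : Matrix (Fin m) (Fin m) ℂ) := by
  -- off-diagonal entries vanish
  have hoff : ∀ i j : Fin m, i ≠ j → L j i = 0 := by
    intro i j hij
    have := h (Pi.single i 1) (Pi.single j 1)
    rw [hermInner_single_right, hermInner_single_right, hermInner_single_right] at this
    simp [Matrix.mulVec_single, Pi.single_apply, hij.symm] at this
    exact this
  -- diagonal entries are equal
  have hdiag : ∀ i k : Fin m, L i i = L k k := by
    intro i k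
    by_cases hik : i = k
    · rw [hik]
    have := h (Pi.single i 1 + Pi.single k 1) (Pi.single i 1 + Pi.single k 1)
    have hL2ii : (L * L) i i = L i i ^ 2 := by
      rw [Matrix.mul_apply]
      rw [Finset.sum_eq_single i]
      · ring
      · intro l _ hl; rw [hoff l i (by exact hl)]; ring
      · simp
    have hL2kk : (L * L) k k = L k k ^ 2 := by
      rw [Matrix.mul_apply]
      rw [Finset.sum_eq_single k]
      · ring
      · intro l _ hl; rw [hoff l k (by exact hl)]; ring
      · simp
    have hL2ik : (L * L) i k = 0 := by
      rw [Matrix.mul_apply]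
      apply Finset.sum_eq_zero
      intro l _
      by_cases hl : l = i
      · subst hl; rw [hoff k l (Ne.symm hik)]; ring
      · rw [hoff l i hl]; ring
    have hL2ki : (L * L) k i = 0 := by
      rw [Matrix.mul_apply]
      apply Finset.sum_eq_zero
      intro l _
      by_cases hl : l = k
      · subst hl; rw [hoff i l hik]; ring
      · rw [hoff l k hl]; ring
    have hherm : ∀ v : Fin m → ℂ,
        hermInner v (Pi.single i 1 + Pi.single k 1) = v i + v k := by
      intro v
      simp only [hermInner, Pi.add_apply, map_add, mul_add, Finset.sum_add_distrib]
      rw [← hermInner, ← hermInner, hermInner_single_right, hermInner_single_right]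
    rw [hherm, hherm, hherm] at this
    simp [Matrix.mulVec_add, Matrix.mulVec_single, Pi.single_apply, hik, Ne.symm hik,
      hoff i k hik, hoff k i (Ne.symm hik), hL2ii, hL2kk, hL2ik, hL2ki] at this
    have : (L i i - L k k) ^ 2 = 0 := by linear_combination -this
    have := pow_eq_zero_iff (n := 2) (by norm_num) |>.mp this
    exact sub_eq_zero.mp this
  refine ⟨L ⟨0, hm⟩ ⟨0, hm⟩, ?_⟩
  ext j i
  by_cases hji : j = i
  · subst hji; simp [hdiag j ⟨0, hm⟩]
  · simp [Matrix.one_apply, hji, hoff i j (Ne.symm hji)]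
end

section
/- Let A and B be m×m complex Hermitian matrices that are linearly independent over ℝ. Then there is an open dense subset U ⊆ ℂ^m such that for every a ∈ U the vectors Aa and Ba are linearly independent over ℂ. -/
open Matrix Complex

section helpers
variable {m : ℕ}

lemma indep_of_minor {x y : Fin m → ℂ} {i j : Fin m}
    (h : x i * y j - x j * y i ≠ 0) : LinearIndependent ℂ ![x, y] := by
  rw [LinearIndependent.pair_iff]
  intro s t hst
  have hi : s * x i + t * y i = 0 := by
    have := congrFun hst i; simpa using this
  have hj : s * x j + t * y j = 0 := by
    have := congrFun hst j; simpa using this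
  have h1 : s * (x i * y j - x j * y i) = 0 := by
    linear_combination y j * hi - y i * hj
  have h2 : t * (x i * y j - x j * y i) = 0 := by
    linear_combination x i * hj - x j * hi
  exact ⟨(mul_eq_zero.1 h1).resolve_right h, (mul_eq_zero.1 h2).resolve_right h⟩

lemma minor_of_indep {x y : Fin m → ℂ}
    (h : LinearIndependent ℂ ![x, y]) : ∃ i j, x i * y j - x j * y i ≠ 0 := by
  by_contra hc
  push_neg at hc
  have hx : x ≠ 0 := by
    have := h.ne_zero 0
    simpa using this
  obtain ⟨i, hi⟩ := Function.ne_iff.1 hx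
  simp only [Pi.zero_apply] at hi
  have := (LinearIndependent.pair_iff.1 h) (y i) (-(x i)) ?_
  · exact hi (by simpa using (neg_eq_zero.1 this.2))
  · funext j
    have := hc i j
    simp only [Pi.add_apply, Pi.smul_apply, Pi.zero_apply, smul_eq_mul, neg_mul]
    linear_combination -this

lemma scalar_of_dep {x y : Fin m → ℂ}
    (h : ¬ LinearIndependent ℂ ![x, y]) (hx : x ≠ 0) : ∃ c : ℂ, y = c • x := by
  rw [LinearIndependent.pair_iff] at h
  push_neg at h
  obtain ⟨s, t, hst, hne⟩ := h
  by_cases ht : t = 0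
  · exfalso
    subst ht
    have hs : s ≠ 0 := fun h0 => hne h0 rfl
    have : s • x = 0 := by simpa using hst
    exact hx ((smul_eq_zero.1 this).resolve_left hs)
  · refine ⟨-s/t, ?_⟩
    funext k
    have := congrFun hst k
    simp only [Pi.add_apply, Pi.smul_apply, Pi.zero_apply, smul_eq_mul] at this ⊢
    field_simp
    linear_combination this

lemma exists_good (A B : Matrix (Fin m) (Fin m) ℂ)
    (hA : A.IsHermitian) (hB : B.IsHermitian)
    (hind : ∀ α β : ℝ, (α : ℂ) • A + (β : ℂ) • B = 0 → α = 0 ∧ β = 0) :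
    ∃ v, LinearIndependent ℂ ![A.mulVec v, B.mulVec v] := by
  by_contra hdep
  push_neg at hdep
  have hA0 : A ≠ 0 := by
    intro h
    exact one_ne_zero (hind 1 0 (by simp [h])).1
  have hv₀' : ∃ v, A.mulVec v ≠ 0 := by
    by_contra h
    push_neg at h
    apply hA0
    ext i j
    have := congrFun (h (Pi.single j 1)) i
    simpa using this
  obtain ⟨v₀, hv₀⟩ := hv₀'
  have hspan : ∀ v, A.mulVec v ≠ 0 → ∃ c, B.mulVec v = c • A.mulVec v :=
    fun v hv => scalar_of_dep (hdep v) hv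
  have key : ∀ (u v : Fin m → ℂ) (cu cv : ℂ), LinearIndependent ℂ ![A.mulVec u, A.mulVec v] →
      B.mulVec u = cu • A.mulVec u → B.mulVec v = cv • A.mulVec v → cu = cv := by
    intro u v cu cv hin hu hv
    have hsum : A.mulVec (u + v) = A.mulVec u + A.mulVec v := by rw [Matrix.mulVec_add]
    have hne : A.mulVec (u + v) ≠ 0 := by
      intro h0
      rw [hsum] at h0
      have := (LinearIndependent.pair_iff.1 hin) 1 1 (by simpa using h0)
      exact one_ne_zero this.1
    obtain ⟨c, hc⟩ := hspan (u + v) hne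
    rw [hsum, Matrix.mulVec_add, smul_add] at hc
    have hpair := (LinearIndependent.pair_iff.1 hin) (cu - c) (cv - c) ?_
    · have h1 : cu = c := by linear_combination hpair.1
      have h2 : cv = c := by linear_combination hpair.2
      rw [h1, h2]
    · rw [sub_smul, sub_smul, ← hu, ← hv, sub_add_sub_comm, hc, sub_self]
  by_cases hrank : ∃ u w, LinearIndependent ℂ ![A.mulVec u, A.mulVec w]
  · -- rank ≥ 2 : B = cu • A
    obtain ⟨u, w, huw⟩ := hrank
    have hAu : A.mulVec u ≠ 0 := by simpa using huw.ne_zero 0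
    have hAw : A.mulVec w ≠ 0 := by simpa using huw.ne_zero 1
    obtain ⟨cu, hcu⟩ := hspan u hAu
    obtain ⟨cw, hcw⟩ := hspan w hAw
    have hcucw : cu = cw := key u w cu cw huw hcu hcw
    have hall : ∀ v, B.mulVec v = cu • A.mulVec v := by
      intro v
      by_cases hv : A.mulVec v = 0
      · have h1 : A.mulVec (u + v) = A.mulVec u := by
          rw [Matrix.mulVec_add, hv, add_zero]
        obtain ⟨e, he⟩ := hspan (u + v) (h1 ▸ hAu)
        rw [Matrix.mulVec_add, h1] at he
        have hBv1 : B.mulVec v = (e - cu) • A.mulVec u := by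
          rw [sub_smul, ← hcu, eq_sub_iff_add_eq, add_comm]
          exact he
        have h1' : A.mulVec (w + v) = A.mulVec w := by
          rw [Matrix.mulVec_add, hv, add_zero]
        obtain ⟨f, hf⟩ := hspan (w + v) (h1' ▸ hAw)
        rw [Matrix.mulVec_add, h1'] at hf
        have hBv2 : B.mulVec v = (f - cw) • A.mulVec w := by
          rw [sub_smul, ← hcw, eq_sub_iff_add_eq, add_comm]
          exact hf
        have hpair := (LinearIndependent.pair_iff.1 huw) (e - cu) (-(f - cw)) ?_
        · rw [hBv1, hpair.1, zero_smul, hv, smul_zero]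
        · rw [neg_smul, ← hBv1, ← hBv2, add_neg_cancel]
      · obtain ⟨cv, hcv⟩ := hspan v hv
        suffices h : cv = cu by rw [hcv, h]
        by_cases hvu : LinearIndependent ℂ ![A.mulVec u, A.mulVec v]
        · exact (key u v cu cv hvu hcu hcv).symm
        · obtain ⟨c, hc⟩ := scalar_of_dep hvu hAu
          have hc0 : c ≠ 0 := by
            intro h0
            exact hv (by rw [hc, h0, zero_smul])
          have hwv : LinearIndependent ℂ ![A.mulVec w, A.mulVec v] := by
            rw [LinearIndependent.pair_iff]
            intro s t hst
            rw [hc, smul_smul] at hst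
            have := (LinearIndependent.pair_iff.1 huw) (t * c) s
              (by rw [add_comm]; exact hst)
            exact ⟨this.2, (mul_eq_zero.1 this.1).resolve_right hc0⟩
          exact (key w v cw cv hwv hcw hcv).symm.trans hcucw.symm
    have hBA : B = cu • A := by
      ext i j
      have := congrFun (hall (Pi.single j 1)) i
      simpa using this
    have hcur : (starRingEnd ℂ) cu = cu := by
      have h1 : Bᴴ = B := hB
      rw [hBA, conjTranspose_smul, hA] at h1
      rw [Complex.star_def] at h1
      by_contra hne
      apply hA0
      have h2 : ((starRingEnd ℂ) cu - cu) • A = 0 := by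
        rw [sub_smul, h1, sub_self]
      exact (smul_eq_zero.1 h2).resolve_left (sub_ne_zero.2 hne)
    have hre : (cu.re : ℂ) = cu := Complex.conj_eq_iff_re.1 hcur
    have := hind (-cu.re) 1 ?_
    · exact one_ne_zero this.2
    · rw [hBA]
      push_cast
      rw [hre]
      module
  · -- rank ≤ 1
    push_neg at hrank
    have hAspan : ∀ v : Fin m → ℂ, ∃ c : ℂ, A.mulVec v = c • A.mulVec v₀ :=
      fun v => scalar_of_dep (hrank v₀ v) hv₀
    obtain ⟨d₀, hd₀⟩ := hspan v₀ hv₀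
    have hBspan : ∀ v : Fin m → ℂ, ∃ d : ℂ, B.mulVec v = d • A.mulVec v₀ := by
      intro v
      obtain ⟨c, hc⟩ := hAspan v
      set t : ℂ := if c = -1 then 2 else 1 with hts
      have ht0 : t ≠ 0 := by
        rw [hts]; split_ifs <;> norm_num
      have h1tc : 1 + t * c ≠ 0 := by
        rw [hts]; split_ifs with h
        · rw [h]; norm_num
        · rw [one_mul]
          intro h0
          exact h (by linear_combination h0)
      have hAtv : A.mulVec (v₀ + t • v) = (1 + t * c) • A.mulVec v₀ := by
        rw [Matrix.mulVec_add, Matrix.mulVec_smul, hc, smul_smul, add_smul, one_smul]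
      have hne : A.mulVec (v₀ + t • v) ≠ 0 := by
        rw [hAtv]; exact smul_ne_zero h1tc hv₀
      obtain ⟨e, he⟩ := hspan _ hne
      rw [Matrix.mulVec_add, Matrix.mulVec_smul, hAtv, smul_smul] at he
      have h2 : t • B.mulVec v = (e * (1 + t * c) - d₀) • A.mulVec v₀ := by
        rw [sub_smul, ← hd₀, eq_sub_iff_add_eq, add_comm]
        exact he
      refine ⟨(e * (1 + t * c) - d₀) / t, ?_⟩
      calc B.mulVec v = t⁻¹ • (t • B.mulVec v) := by
            rw [smul_smul, inv_mul_cancel₀ ht0, one_smul]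
        _ = t⁻¹ • ((e * (1 + t * c) - d₀) • A.mulVec v₀) := by rw [h2]
        _ = ((e * (1 + t * c) - d₀) / t) • A.mulVec v₀ := by
            rw [smul_smul]
            congr 1
            rw [div_eq_mul_inv, mul_comm]
    -- entrywise structure
    choose ca hca using hAspan
    choose cb hcb using hBspan
    set u : Fin m → ℂ := A.mulVec v₀ with hu
    have hAe : ∀ i j, A i j = ca (Pi.single j 1) * u i := by
      intro i j
      have := congrFun (hca (Pi.single j 1)) i
      simpa using this
    have hBe : ∀ i j, B i j = cb (Pi.single j 1) * u i := by
      intro i j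
      have := congrFun (hcb (Pi.single j 1)) i
      simpa using this
    obtain ⟨i₀, hi₀⟩ := Function.ne_iff.1 hv₀
    simp only [Pi.zero_apply] at hi₀
    have hi₀' : u i₀ ≠ 0 := hi₀
    have hArel : ∀ i j : Fin m,
        (starRingEnd ℂ) (ca (Pi.single i 1)) * (starRingEnd ℂ) (u j)
          = ca (Pi.single j 1) * u i := by
      intro i j
      have h1 := hA.apply i j
      rw [hAe j i, hAe i j] at h1
      rw [← h1]
      simp [mul_comm]
    have hBrel : ∀ i j : Fin m,
        (starRingEnd ℂ) (cb (Pi.single i 1)) * (starRingEnd ℂ) (u j)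
          = cb (Pi.single j 1) * u i := by
      intro i j
      have h1 := hB.apply i j
      rw [hBe j i, hBe i j] at h1
      rw [← h1]
      simp [mul_comm]
    set α : ℂ := (starRingEnd ℂ) (ca (Pi.single i₀ 1)) / u i₀ with hα
    set β : ℂ := (starRingEnd ℂ) (cb (Pi.single i₀ 1)) / u i₀ with hβ
    have hcaj : ∀ j, ca (Pi.single j 1) = α * (starRingEnd ℂ) (u j) := by
      intro j
      have := hArel i₀ j
      rw [hα]
      field_simp
      linear_combination -this
    have hcbj : ∀ j, cb (Pi.single j 1) = β * (starRingEnd ℂ) (u j) := by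
      intro j
      have := hBrel i₀ j
      rw [hβ]
      field_simp
      linear_combination -this
    have hAentry : ∀ i j, A i j = α * (starRingEnd ℂ) (u j) * u i := by
      intro i j; rw [hAe i j, hcaj j]
    have hBentry : ∀ i j, B i j = β * (starRingEnd ℂ) (u j) * u i := by
      intro i j; rw [hBe i j, hcbj j]
    -- α, β are real
    have hui₀c : (starRingEnd ℂ) (u i₀) ≠ 0 := by
      simpa using hi₀'
    have hαr : (starRingEnd ℂ) α = α := by
      have hrel := hArel i₀ i₀
      rw [hα, map_div₀, Complex.conj_conj]
      field_simp
      linear_combination -hrel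
    have hβr : (starRingEnd ℂ) β = β := by
      have hrel := hBrel i₀ i₀
      rw [hβ, map_div₀, Complex.conj_conj]
      field_simp
      linear_combination -hrel
    have hαre : (α.re : ℂ) = α := Complex.conj_eq_iff_re.1 hαr
    have hβre : (β.re : ℂ) = β := Complex.conj_eq_iff_re.1 hβr
    have hz := hind β.re (-α.re) ?_
    · -- α = 0 gives A = 0 contradiction
      apply hv₀
      have hα0 : α = 0 := by
        rw [← hαre, neg_eq_zero.1 hz.2]
        norm_num
      have hAz : A = 0 := by
        ext i j
        rw [hAentry i j, hα0]
        simp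
      show A.mulVec v₀ = 0
      rw [hAz]
      simp
    · ext i j
      simp only [Matrix.add_apply, Matrix.smul_apply, Matrix.zero_apply, smul_eq_mul]
      rw [hAentry i j, hBentry i j]
      push_cast
      rw [hαre, hβre]
      ring

end helpers


open Polynomial in
theorem stmt16 {m : ℕ} (hm : 0 < m) (A B : Matrix (Fin m) (Fin m) ℂ)
    (hA : A.IsHermitian) (hB : B.IsHermitian)
    (hind : ∀ α β : ℝ, (α : ℂ) • A + (β : ℂ) • B = 0 → α = 0 ∧ β = 0) :
    ∃ U : Set (Fin m → ℂ), IsOpen U ∧ Dense U ∧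
      ∀ a ∈ U, LinearIndependent ℂ ![A.mulVec a, B.mulVec a] := by
  refine ⟨{a | LinearIndependent ℂ ![A.mulVec a, B.mulVec a]}, ?_, ?_, fun a ha => ha⟩
  · have hcont : Continuous fun a : Fin m → ℂ => ![A.mulVec a, B.mulVec a] := by
      apply continuous_pi
      intro i
      fin_cases i
      · simpa using (show Continuous fun a : Fin m → ℂ => A.mulVec a from (Matrix.mulVecLin A).continuous_of_finiteDimensional)
      · simpa using (show Continuous fun a : Fin m → ℂ => B.mulVec a from (Matrix.mulVecLin B).continuous_of_finiteDimensional)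
    exact isOpen_setOf_linearIndependent.preimage hcont
  · obtain ⟨v, hv⟩ := exists_good A B hA hB hind
    obtain ⟨i, j, hmin⟩ := minor_of_indep hv
    have hv0 : v ≠ 0 := by
      intro h
      subst h
      simpa [Matrix.mulVec_zero] using hv.ne_zero 0
    have hvnorm : (0:ℝ) < ‖v‖ := norm_pos_iff.2 hv0
    rw [Metric.dense_iff]
    intro a₀ r hr
    set x : Fin m → ℂ := A.mulVec a₀ with hx
    set y : Fin m → ℂ := B.mulVec a₀ with hy
    set x' : Fin m → ℂ := A.mulVec v with hx'
    set y' : Fin m → ℂ := B.mulVec v with hy'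
    set P : Polynomial ℂ := C (x i * y j - x j * y i)
      + C (x i * y' j + x' i * y j - x j * y' i - x' j * y i) * X
      + C (x' i * y' j - x' j * y' i) * X ^ 2 with hP
    have hcoeff : P.coeff 2 = x' i * y' j - x' j * y' i := by
      simp only [hP, Polynomial.coeff_add, Polynomial.coeff_C_mul, Polynomial.coeff_X_pow,
        Polynomial.coeff_C, Polynomial.coeff_X]
      norm_num
    have hPne : P ≠ 0 := fun h => hmin (by rw [← hcoeff, h, Polynomial.coeff_zero])
    have hfin : {t : ℂ | P.IsRoot t}.Finite := Polynomial.finite_setOf_isRoot hPne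
    have hdense : Dense ({t : ℂ | P.IsRoot t}ᶜ) := by
      simpa [Set.compl_eq_univ_diff] using dense_univ.diff_finite hfin
    obtain ⟨t, htb, htr⟩ := hdense.inter_open_nonempty (Metric.ball 0 (r / ‖v‖))
      Metric.isOpen_ball ⟨0, by simpa using div_pos hr hvnorm⟩
    refine ⟨a₀ + t • v, ?_, ?_⟩
    · rw [Metric.mem_ball, dist_eq_norm, add_sub_cancel_left, norm_smul]
      have ht : ‖t‖ < r / ‖v‖ := by simpa [dist_eq_norm] using htb
      calc ‖t‖ * ‖v‖ < (r / ‖v‖) * ‖v‖ := by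
            exact mul_lt_mul_of_pos_right ht hvnorm
        _ = r := by field_simp
    · show LinearIndependent ℂ ![A.mulVec (a₀ + t • v), B.mulVec (a₀ + t • v)]
      have hxa : ∀ k, (A.mulVec (a₀ + t • v)) k = x k + t * x' k := by
        intro k
        rw [Matrix.mulVec_add, Matrix.mulVec_smul]
        simp [hx, hx']
      have hya : ∀ k, (B.mulVec (a₀ + t • v)) k = y k + t * y' k := by
        intro k
        rw [Matrix.mulVec_add, Matrix.mulVec_smul]
        simp [hy, hy']
      apply indep_of_minor (i := i) (j := j)
      rw [hxa, hxa, hya, hya]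
      have heval : (x i + t * x' i) * (y j + t * y' j)
          - (x j + t * x' j) * (y i + t * y' i) = P.eval t := by
        simp only [hP, Polynomial.eval_add, Polynomial.eval_mul, Polynomial.eval_C,
          Polynomial.eval_X, Polynomial.eval_pow]
        ring
      rw [heval]
      exact htr
end

section
/- Let A be an invertible m×m complex Hermitian matrix and let B be an m×m complex Hermitian matrix such that ⟨Ba, a⟩² = ⟨Aa, a⟩ · ⟨B A^{-1} B a, a⟩ for all a ∈ ℂ^m. Then B = λA for some λ ∈ ℂ. -/
open Matrix Complex

private lemma hermInner_eq_dot {m : ℕ} (x y : Fin m → ℂ) :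
    hermInner x y = star y ⬝ᵥ x := by
  simp only [hermInner, dotProduct, Pi.star_apply, starRingEnd_apply]
  exact Finset.sum_congr rfl fun l _ => mul_comm _ _

private lemma dot_single {m : ℕ} (x : Fin m → ℂ) (i : Fin m) :
    x ⬝ᵥ Pi.single i 1 = x i := by
  rw [dotProduct_single, mul_one]

private lemma expand_aux {m : ℕ} (M : Matrix (Fin m) (Fin m) ℂ) (a b : Fin m → ℂ) (t : ℂ) :
    star (a + t • b) ⬝ᵥ M *ᵥ (a + t • b)
      = star a ⬝ᵥ M *ᵥ a + t * (star a ⬝ᵥ M *ᵥ b)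
        + (starRingEnd ℂ) t * (star b ⬝ᵥ M *ᵥ a)
        + (starRingEnd ℂ) t * t * (star b ⬝ᵥ M *ᵥ b) := by
  simp only [mulVec_add, mulVec_smul, star_add, star_smul, dotProduct_add, add_dotProduct,
    smul_dotProduct, dotProduct_smul, smul_eq_mul, starRingEnd_apply]
  ring

private lemma key_poly (pB qB rB sB pA qA rA sA pC qC rC sC : ℂ)
    (hk : ∀ t : ℂ,
      (pB + t * qB + (starRingEnd ℂ) t * rB + (starRingEnd ℂ) t * t * sB) ^ 2
        = (pA + t * qA + (starRingEnd ℂ) t * rA + (starRingEnd ℂ) t * t * sA)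
          * (pC + t * qC + (starRingEnd ℂ) t * rC + (starRingEnd ℂ) t * t * sC)) :
    rB ^ 2 = rA * rC := by
  have E0 := hk 0
  have E1 := hk 1
  have Em1 := hk (-1)
  have Ei := hk Complex.I
  have Emi := hk (-Complex.I)
  have E2 := hk 2
  have Em2 := hk (-2)
  have E2i := hk (2 * Complex.I)
  have E11 := hk (1 + Complex.I)
  simp only [map_zero, _root_.map_one, map_neg, _root_.map_mul, map_add, map_ofNat,
    Complex.conj_I] at E0 E1 Em1 Ei Emi E2 Em2 E2i E11
  have hI : Complex.I ^ 2 = -1 := Complex.I_sq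
  linear_combination (Complex.I / 8) * E0 + (1/8 - (5/24) * Complex.I) * E1
    + (1/8 - (1/24) * Complex.I) * Em1 + (-1/8 - (1/8) * Complex.I) * Ei
    + (-1/8 + (1/24) * Complex.I) * Emi + (-(1/48) * Complex.I) * E2
    + ((1/48) * Complex.I) * Em2 + (-(1/24) * Complex.I) * E2i
    + ((1/4) * Complex.I) * E11
    - (((-1 : ℂ)/4) * sA * sC + ((-1 : ℂ)/4) * sA * pC + ((3 : ℂ)/4) * rA * rC + ((-1 : ℂ)/4) * rA * qC + ((-1 : ℂ)/4) * qA * rC + ((-1 : ℂ)/4) * qA * qC + ((-1 : ℂ)/4) * pA * sC + ((1 : ℂ)/4) * sB^2 + ((-3 : ℂ)/4) * rB^2 + ((1 : ℂ)/2) * qB * rB + ((1 : ℂ)/4) * qB^2 + ((1 : ℂ)/2) * pB * sB + ((1 : ℂ)/4) * Complex.I * sA * rC + ((1 : ℂ)/4) * Complex.I * sA * qC + ((1 : ℂ)/4) * Complex.I * rA * sC + ((1 : ℂ)/4) * Complex.I * qA * sC + ((-1 : ℂ)/2) * Complex.I * rB * sB + ((-1 : ℂ)/2) * Complex.I * qB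 * sB + ((1 : ℂ)/4) * Complex.I^2 * sA * sC + ((1 : ℂ)/4) * Complex.I^2 * sA * rC + ((-1 : ℂ)/4) * Complex.I^2 * sA * qC + ((1 : ℂ)/4) * Complex.I^2 * rA * sC + ((-1 : ℂ)/4) * Complex.I^2 * qA * sC + ((-1 : ℂ)/4) * Complex.I^2 * sB^2 + ((-1 : ℂ)/2) * Complex.I^2 * rB * sB + ((1 : ℂ)/2) * Complex.I^2 * qB * sB + ((1 : ℂ)/2) * Complex.I^3 * sA * sC + ((-1 : ℂ)/2) * Complex.I^3 * sB^2) * hI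

private lemma polarize {m : ℕ} (A B C : Matrix (Fin m) (Fin m) ℂ)
    (h1 : ∀ a : Fin m → ℂ,
      (star a ⬝ᵥ B *ᵥ a) ^ 2 = (star a ⬝ᵥ A *ᵥ a) * (star a ⬝ᵥ C *ᵥ a))
    (a b : Fin m → ℂ) :
    (star b ⬝ᵥ B *ᵥ a) ^ 2 = (star b ⬝ᵥ A *ᵥ a) * (star b ⬝ᵥ C *ᵥ a) := by
  apply key_poly (star a ⬝ᵥ B *ᵥ a) (star a ⬝ᵥ B *ᵥ b) _ (star b ⬝ᵥ B *ᵥ b)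
    (star a ⬝ᵥ A *ᵥ a) (star a ⬝ᵥ A *ᵥ b) _ (star b ⬝ᵥ A *ᵥ b)
    (star a ⬝ᵥ C *ᵥ a) (star a ⬝ᵥ C *ᵥ b) _ (star b ⬝ᵥ C *ᵥ b)
  intro t
  have := h1 (a + t • b)
  rwa [expand_aux, expand_aux, expand_aux] at this

private lemma prop_of_sq {m : ℕ} (u v w : Fin m → ℂ)
    (h : ∀ a, (u ⬝ᵥ a) ^ 2 = (v ⬝ᵥ a) * (w ⬝ᵥ a)) :
    ∃ k : ℂ, u = k • v := by
  by_cases hv : v = 0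
  · refine ⟨0, ?_⟩
    ext j
    simp only [Pi.smul_apply, Pi.zero_apply, smul_eq_mul, zero_mul]
    have h1 := h (Pi.single j 1)
    rw [hv, zero_dotProduct, zero_mul] at h1
    have h2 := sq_eq_zero_iff.mp h1
    rwa [dot_single] at h2
  · obtain ⟨j, hj⟩ : ∃ j, v j ≠ 0 := by
      by_contra hc; push_neg at hc; exact hv (funext hc)
    refine ⟨u j / v j, ?_⟩
    have ker : ∀ a, v ⬝ᵥ a = 0 → u ⬝ᵥ a = 0 := by
      intro a ha
      have h1 := h a
      rw [ha, zero_mul] at h1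
      exact sq_eq_zero_iff.mp h1
    have main : ∀ a, v j * (u ⬝ᵥ a) = (v ⬝ᵥ a) * u j := by
      intro a
      have h0 : v ⬝ᵥ ((v j) • a - (v ⬝ᵥ a) • (Pi.single j 1 : Fin m → ℂ)) = 0 := by
        rw [dotProduct_sub, dotProduct_smul, dotProduct_smul, smul_eq_mul, smul_eq_mul,
          dot_single]
        ring
      have h1 := ker _ h0
      rw [dotProduct_sub, dotProduct_smul, dotProduct_smul, smul_eq_mul, smul_eq_mul,
        dot_single, sub_eq_zero] at h1
      exact h1
    ext i
    have h1 := main (Pi.single i 1)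
    rw [dot_single, dot_single] at h1
    rw [Pi.smul_apply, smul_eq_mul, div_mul_eq_mul_div, eq_div_iff hj]
    linear_combination h1

private lemma eigen_all {m : ℕ} (hm : 0 < m) (M : Matrix (Fin m) (Fin m) ℂ)
    (h : ∀ y : Fin m → ℂ, ∃ k : ℂ, y ᵥ* M = k • y) :
    ∃ lam : ℂ, M = lam • 1 := by
  have hrow : ∀ i, ∃ k : ℂ, M i i = k ∧ ∀ j, i ≠ j → M i j = 0 := by
    intro i
    obtain ⟨k, hk⟩ := h (Pi.single i 1)
    rw [single_one_vecMul] at hk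
    refine ⟨k, ?_, fun j hij => ?_⟩
    · have h1 := congrFun hk i
      rwa [Pi.smul_apply, Pi.single_eq_same, smul_eq_mul, mul_one] at h1
    · have h1 := congrFun hk j
      rwa [Pi.smul_apply, Pi.single_eq_of_ne (Ne.symm hij), smul_eq_mul, mul_zero] at h1
  choose k hdiag hoff using hrow
  have hsame : ∀ i i' : Fin m, k i = k i' := by
    intro i i'
    rcases eq_or_ne i i' with hii | hii
    · rw [hii]
    · obtain ⟨c, hc⟩ := h (Pi.single i 1 + Pi.single i' 1)
      rw [add_vecMul, single_one_vecMul, single_one_vecMul] at hc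
      have h1 := congrFun hc i
      have h2 := congrFun hc i'
      simp only [Pi.add_apply, Pi.smul_apply, smul_eq_mul, Pi.single_eq_same,
        Pi.single_eq_of_ne hii, Pi.single_eq_of_ne (Ne.symm hii), mul_one, mul_zero,
        add_zero, zero_add, Matrix.row_apply] at h1 h2
      rw [hdiag i, hoff i' i (Ne.symm hii), add_zero] at h1
      rw [hdiag i', hoff i i' hii, zero_add] at h2
      exact h1.trans h2.symm
  refine ⟨k ⟨0, hm⟩, ?_⟩
  ext i j
  rcases eq_or_ne i j with rfl | hij
  · rw [hdiag i, Matrix.smul_apply, Matrix.one_apply_eq, smul_eq_mul, mul_one,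
      hsame i ⟨0, hm⟩]
  · rw [hoff i j hij, Matrix.smul_apply, Matrix.one_apply_ne hij, smul_eq_mul, mul_zero]

theorem stmt17 {m : ℕ} (hm : 0 < m) (A B : Matrix (Fin m) (Fin m) ℂ)
    (hA : A.IsHermitian) (hAinv : IsUnit A) (hB : B.IsHermitian)
    (h : ∀ a : Fin m → ℂ,
      (hermInner (B.mulVec a) a) ^ 2
        = hermInner (A.mulVec a) a * hermInner ((B * A⁻¹ * B).mulVec a) a) :
    ∃ lam : ℂ, B = lam • A := by
  set C := B * A⁻¹ * B with hC
  have hdet : IsUnit A.det := (Matrix.isUnit_iff_isUnit_det A).mp hAinv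
  have h1 : ∀ a : Fin m → ℂ,
      (star a ⬝ᵥ B *ᵥ a) ^ 2 = (star a ⬝ᵥ A *ᵥ a) * (star a ⬝ᵥ C *ᵥ a) := by
    intro a
    have ha := h a
    rwa [hermInner_eq_dot, hermInner_eq_dot, hermInner_eq_dot] at ha
  have h2 : ∀ (a b : Fin m → ℂ),
      (b ⬝ᵥ B *ᵥ a) ^ 2 = (b ⬝ᵥ A *ᵥ a) * (b ⬝ᵥ C *ᵥ a) := by
    intro a b
    have h3 := polarize A B C h1 a (star b)
    rwa [star_star] at h3
  have h4 : ∀ c : Fin m → ℂ, ∃ k : ℂ, c ᵥ* B = k • (c ᵥ* A) := by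
    intro c
    apply prop_of_sq (c ᵥ* B) (c ᵥ* A) (c ᵥ* C)
    intro a
    have h5 := h2 a c
    rwa [dotProduct_mulVec, dotProduct_mulVec, dotProduct_mulVec] at h5
  have h5 : ∀ y : Fin m → ℂ, ∃ k : ℂ, y ᵥ* (A⁻¹ * B) = k • y := by
    intro y
    obtain ⟨k, hk⟩ := h4 (y ᵥ* A⁻¹)
    refine ⟨k, ?_⟩
    calc y ᵥ* (A⁻¹ * B) = (y ᵥ* A⁻¹) ᵥ* B := (vecMul_vecMul y A⁻¹ B).symm
      _ = k • ((y ᵥ* A⁻¹) ᵥ* A) := hk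
      _ = k • (y ᵥ* (A⁻¹ * A)) := by rw [vecMul_vecMul]
      _ = k • y := by rw [nonsing_inv_mul A hdet, vecMul_one]
  obtain ⟨lam, hlam⟩ := eigen_all hm (A⁻¹ * B) h5
  refine ⟨lam, ?_⟩
  have h6 : A * (A⁻¹ * B) = A * (lam • 1) := by rw [hlam]
  rwa [← mul_assoc, mul_nonsing_inv A hdet, one_mul, Matrix.mul_smul, mul_one] at h6
end

section
/- Suppose k = 3 and F = (F₁, F₂, F₃) is nondegenerate, and suppose that for generic a ∈ ℂ^m (i.e., for all a in some open dense subset of ℂ^m) the vector A₃a lies in the ℂ-linear span of A₁a and A₂a. Then the ℂ²-valued Hermitian form F' = (F₁, F₂), defined by the matrices A₁ and A₂, is nondegenerate. -/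
open Matrix Complex

theorem stmt18 {m : ℕ} (hm : 0 < m)
    (A : Fin 3 → Matrix (Fin m) (Fin m) ℂ) (hHerm : ∀ j, (A j).IsHermitian)
    (hnd : FNondeg A)
    (hgen : ∃ U : Set (Fin m → ℂ), IsOpen U ∧ Dense U ∧
      ∀ a ∈ U, (A 2).mulVec a ∈
        Submodule.span ℂ ({(A 0).mulVec a, (A 1).mulVec a} : Set (Fin m → ℂ))) :
    FNondeg (fun j : Fin 2 => A j.castSucc) := by
  obtain ⟨hLI, hND⟩ := hnd
  constructor
  · exact hLI.comp _ (Fin.castSucc_injective 2)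
  · intro ζ hζ
    obtain ⟨U, hUo, hUd, hU⟩ := hgen
    have h0 : ∀ z, hermInner ((A 0).mulVec z) ζ = 0 := by
      intro z
      have := congrFun (hζ z) 0
      simpa [Fform] using this
    have h1 : ∀ z, hermInner ((A 1).mulVec z) ζ = 0 := by
      intro z
      have := congrFun (hζ z) 1
      simpa [Fform] using this
    have h2 : ∀ z, hermInner ((A 2).mulVec z) ζ = 0 := by
      have hcont : Continuous fun a : Fin m → ℂ => hermInner ((A 2).mulVec a) ζ := by
        simp only [hermInner, Matrix.mulVec, dotProduct]
        fun_prop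
      have heq : Set.EqOn (fun a => hermInner ((A 2).mulVec a) ζ)
          (fun _ => (0 : ℂ)) U := by
        intro a ha
        obtain ⟨c, d, hcd⟩ := Submodule.mem_span_pair.mp (hU a ha)
        have hlin : hermInner ((A 2).mulVec a) ζ
            = c * hermInner ((A 0).mulVec a) ζ + d * hermInner ((A 1).mulVec a) ζ := by
          rw [← hcd]
          simp [hermInner, Finset.mul_sum, Finset.sum_add_distrib, add_mul, mul_assoc]
        simp [hlin, h0 a, h1 a]
      have hall := Continuous.ext_on hUd hcont continuous_const heq
      intro z
      exact congrFun hall z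
    apply hND ζ
    intro z
    funext j
    fin_cases j
    · simpa [Fform] using h0 z
    · simpa [Fform] using h1 z
    · simpa [Fform] using h2 z
end
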